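/- Assume: φ ∈ C([0,∞)) ∩ C¹((0,∞)) with φ(0) = 0, φ > 0 and φ' > 0 on (0,∞); l ∈ C([0,∞)) with l > 0 on (0,∞), l C-increasing on (0,ξ₀) for some ξ₀ > 0, and s ↦ s·φ'(s)/l(s) integrable on (0,1); f ∈ C(ℝ) with f(0)·l(0) = 0, f > 0 and C-increasing on (0,η₀) for some η₀ > 0 and C ≥ 1. Let T > 0, ℘ ∈ C¹([0,T]) with ℘ > 0, and a ∈ C([0,T]) with a > 0. Suppose the Keller–Osserman condition (KO₀) holds: ∫₀^ε ds/K⁻¹(F(s)) < ∞ for some ε ∈ (0,η₀), where K(t) = ∫₀^t s·φ'(s)/l(s) ds and F(t) = ∫₀^t f(s) ds. Then there exists η₁ ∈ (0,η₀] (depending only on φ, f, l, ℘, a, T and the C-increasing constants) such that, for every η ∈ (0,η₁), every w ∈ C¹([0,T]) with w(0) = 0, w(T) = η, 0 ≤ w ≤ η, w' ≥ 0 on [0,T], and t ↦ ℘(t)·φ(w'(t)) differentiable on (0,T) with derivative ℘(t)·a(t)·f(w(t))·l(|w'(t)|), satisfies w'(0) = 0. -/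

import Mathlib

open Set MeasureTheory

/-- Given `C ≥ 1`, a function `h` is `C`-increasing on `I` if
`sup {h s : s ∈ I, s ≤ t} ≤ C * h t` for every `t ∈ I`. -/
def CIncreasingOn (C : ℝ) (h : ℝ → ℝ) (I : Set ℝ) : Prop :=
  ∀ s ∈ I, ∀ t ∈ I, s ≤ t → h s ≤ C * h t

open Filter Topology

set_option maxHeartbeats 1000000

/-- Extend a continuous strictly monotone function on `[0,b]` with value `0` at `0`
to a global increasing homeomorphism-like pair `(G, E)` with `G` a continuous strictly
monotone global inverse. -/
lemma exists_global_inverse (Fn : ℝ → ℝ) (b : ℝ) (hb : 0 < b)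
    (hc : ContinuousOn Fn (Icc 0 b)) (hm : StrictMonoOn Fn (Icc 0 b)) (h0 : Fn 0 = 0) :
    ∃ G E : ℝ → ℝ, Continuous G ∧ StrictMono G ∧ G 0 = 0 ∧
      (∀ x ∈ Icc 0 b, E x = Fn x) ∧ (∀ y, E (G y) = y) ∧
      (∀ x ∈ Icc 0 b, G (Fn x) = x) ∧ (∀ y ∈ Icc 0 (Fn b), Fn (G y) = y) := by
  classical
  set cl : ℝ → ℝ := fun x => max 0 (min x b) with hcl
  have hclmem : ∀ x, cl x ∈ Icc 0 b := by
    intro x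
    exact ⟨le_max_left _ _, max_le hb.le (min_le_right _ _)⟩
  have hclcont : Continuous cl := continuous_const.max (continuous_id.min continuous_const)
  have hclmono : Monotone cl := fun x y hxy =>
    max_le_max le_rfl (min_le_min hxy le_rfl)
  set E : ℝ → ℝ := fun x => Fn (cl x) + (min x 0 + max (x - b) 0) with hE
  have hcl_of_mem : ∀ x ∈ Icc (0:ℝ) b, cl x = x := by
    intro x hx
    simp [hcl, min_eq_left hx.2, max_eq_right hx.1]
  have hE_eq : ∀ x ∈ Icc (0:ℝ) b, E x = Fn x := by
    intro x hx
    simp [hE, hcl_of_mem x hx, min_eq_right hx.1, max_eq_right (sub_nonpos.2 hx.2)]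
  have hEcont : Continuous E := by
    refine ((hc.comp_continuous hclcont hclmem)).add ?_
    exact (continuous_id.min continuous_const).add
      ((continuous_id.sub continuous_const).max continuous_const)
  have hEmono : StrictMono E := by
    intro x y hxy
    have m1 : Fn (cl x) ≤ Fn (cl y) :=
      hm.monotoneOn (hclmem x) (hclmem y) (hclmono hxy.le)
    have m2 : min x 0 ≤ min y 0 := min_le_min hxy.le le_rfl
    have m3 : max (x - b) 0 ≤ max (y - b) 0 := max_le_max (by linarith) le_rfl
    rcases le_or_gt y 0 with hy | hy
    · have s2 : min x 0 < min y 0 := by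
        rw [min_eq_left (hxy.le.trans hy), min_eq_left hy]; exact hxy
      simp only [hE]; linarith
    · rcases le_or_gt b x with hbx | hbx
      · have s3 : max (x - b) 0 < max (y - b) 0 := by
          rw [max_eq_left (by linarith), max_eq_left (by linarith)]; linarith
        simp only [hE]; linarith
      · have s1 : Fn (cl x) < Fn (cl y) := by
          apply hm (hclmem x) (hclmem y)
          have h1 : cl x < min y b := by
            rcases le_or_gt x 0 with hx0 | hx0
            · have : cl x = 0 := by
                simp [hcl, max_eq_left, min_le_of_left_le hx0]
              rw [this]; exact lt_min hy hb
            · have : cl x = x := by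
                simp [hcl, min_eq_left hbx.le, max_eq_right hx0.le]
              rw [this]; exact lt_min hxy hbx
          calc cl x < min y b := h1
            _ ≤ cl y := le_max_right _ _
        simp only [hE]; linarith
  have htop : Tendsto E atTop atTop := by
    have heq : (fun x => Fn b + (x - b)) =ᶠ[atTop] E := by
      filter_upwards [eventually_ge_atTop (max b 0)] with x hx
      have hxb : b ≤ x := le_trans (le_max_left _ _) hx
      have hx0 : (0:ℝ) ≤ x := le_trans (le_max_right _ _) hx
      have : cl x = b := by simp [hcl, min_eq_right hxb, max_eq_right hb.le]
      simp [hE, this, min_eq_right hx0, max_eq_left (sub_nonneg.2 hxb)]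
    exact Tendsto.congr' heq (tendsto_atTop_add_const_left _ _
      (tendsto_atTop_add_const_right _ _ tendsto_id))
  have hbot : Tendsto E atBot atBot := by
    have heq : (fun x : ℝ => x) =ᶠ[atBot] E := by
      filter_upwards [eventually_le_atBot (0:ℝ)] with x hx
      have : cl x = 0 := by
        simp [hcl, max_eq_left, min_le_of_left_le hx]
      simp [hE, this, h0, min_eq_left hx, max_eq_right (by linarith : x - b ≤ 0)]
    exact Tendsto.congr' heq tendsto_id
  have hEsurj : Function.Surjective E := hEcont.surjective htop hbot
  set e := StrictMono.orderIsoOfSurjective E hEmono hEsurj with he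
  set G : ℝ → ℝ := fun y => e.symm y with hG
  have hGE : ∀ x, G (E x) = x := fun x =>
    StrictMono.orderIsoOfSurjective_symm_apply_self E hEmono hEsurj x
  have hEG : ∀ y, E (G y) = y := fun y => e.apply_symm_apply y
  have hGcont : Continuous G := e.toHomeomorph.symm.continuous
  have hGmono : StrictMono G := e.symm.strictMono
  have hE0 : E 0 = 0 := by
    have h00 : (0:ℝ) ∈ Icc (0:ℝ) b := ⟨le_rfl, hb.le⟩
    rw [hE_eq 0 h00, h0]
  have hG0 : G 0 = 0 := by
    have := hGE 0
    rwa [hE0] at this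
  have hGF : ∀ x ∈ Icc (0:ℝ) b, G (Fn x) = x := by
    intro x hx
    rw [← hE_eq x hx, hGE]
  have hFG : ∀ y ∈ Icc 0 (Fn b), Fn (G y) = y := by
    intro y hy
    have hGy : G y ∈ Icc (0:ℝ) b := by
      constructor
      · rw [← hG0]; exact hGmono.monotone hy.1
      · have : G y ≤ G (Fn b) := hGmono.monotone hy.2
        rwa [hGF b ⟨hb.le, le_rfl⟩] at this
    rw [← hE_eq _ hGy, hEG]
  exact ⟨G, E, hGcont, hGmono, hG0, hE_eq, hEG, hGF, hFG⟩

/-- Proposition 3.8: under the Keller–Osserman condition (KO₀), solutions of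
the singular two-point Dirichlet problem `[℘ φ(w')]' = ℘ a f(w) l(|w'|)`,
`w(0)=0`, `w(T)=η`, with `η` sufficiently small, satisfy `w'(0) = 0`. -/
theorem stmt_6
    (φ φ' l : ℝ → ℝ)
    (hφc : ContinuousOn φ (Ici 0)) (hφ0 : φ 0 = 0)
    (hφpos : ∀ t : ℝ, 0 < t → 0 < φ t)
    (hφd : ∀ t : ℝ, 0 < t → HasDerivAt φ (φ' t) t)
    (hφ'c : ContinuousOn φ' (Ioi 0))
    (hφ'pos : ∀ t : ℝ, 0 < t → 0 < φ' t)
    (hlc : ContinuousOn l (Ici 0)) (hlpos : ∀ t : ℝ, 0 < t → 0 < l t)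
    (C ξ₀ : ℝ) (hC : 1 ≤ C) (hξ₀ : 0 < ξ₀)
    (hlCinc : CIncreasingOn C l (Ioo 0 ξ₀))
    (hint : IntegrableOn (fun s => s * φ' s / l s) (Ioo 0 1))
    (η₀ : ℝ) (hη₀ : 0 < η₀)
    (f : ℝ → ℝ) (hfc : Continuous f) (hfl0 : f 0 * l 0 = 0)
    (hfpos : ∀ t ∈ Ioo (0:ℝ) η₀, 0 < f t)
    (hfCinc : CIncreasingOn C f (Ioo 0 η₀))
    (T : ℝ) (hT : 0 < T)
    (p p' : ℝ → ℝ)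
    (hpd : ∀ t ∈ Icc (0:ℝ) T, HasDerivWithinAt p (p' t) (Icc 0 T) t)
    (hp'c : ContinuousOn p' (Icc (0:ℝ) T))
    (hppos : ∀ t ∈ Icc (0:ℝ) T, 0 < p t)
    (a : ℝ → ℝ) (hac : ContinuousOn a (Icc (0:ℝ) T))
    (hapos : ∀ t ∈ Icc (0:ℝ) T, 0 < a t)
    (F K Kinv : ℝ → ℝ)
    (hF : ∀ t, F t = ∫ s in (0:ℝ)..t, f s)
    (hK : ∀ t, K t = ∫ s in (0:ℝ)..t, s * φ' s / l s)
    (hKinv : ∀ t : ℝ, 0 ≤ t → Kinv (K t) = t)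
    (hKO : ∃ ε ∈ Ioo (0:ℝ) η₀, IntegrableOn (fun s => 1 / Kinv (F s)) (Ioo 0 ε)) :
    ∃ η₁ ∈ Ioc (0:ℝ) η₀, ∀ η ∈ Ioo (0:ℝ) η₁, ∀ w w' : ℝ → ℝ,
      (∀ t ∈ Icc (0:ℝ) T, HasDerivWithinAt w (w' t) (Icc 0 T) t) →
      ContinuousOn w' (Icc (0:ℝ) T) →
      w 0 = 0 → w T = η →
      (∀ t ∈ Icc (0:ℝ) T, 0 ≤ w t ∧ w t ≤ η ∧ 0 ≤ w' t) →
      (∀ t ∈ Ioo (0:ℝ) T,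
        HasDerivAt (fun s => p s * φ (w' s)) (p t * a t * f (w t) * l |w' t|) t) →
      w' 0 = 0 := by
  classical
  obtain ⟨ε, hεmem, hKOint⟩ := hKO
  have hC0 : (0:ℝ) < C := lt_of_lt_of_le one_pos hC
  have h0T : (0:ℝ) ∈ Icc (0:ℝ) T := ⟨le_rfl, hT.le⟩
  have hpc : ContinuousOn p (Icc 0 T) := fun t ht => (hpd t ht).continuousWithinAt
  obtain ⟨tm, htm, hminp⟩ := isCompact_Icc.exists_isMinOn ⟨0, h0T⟩ hpc
  obtain ⟨tM, htM, hmaxp⟩ := isCompact_Icc.exists_isMaxOn ⟨0, h0T⟩ hpc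
  obtain ⟨sm, hsm, hmina⟩ := isCompact_Icc.exists_isMinOn ⟨0, h0T⟩ hac
  set p₀ := p tm with hp₀def
  set P := p tM with hPdef
  set a₀ := a sm with ha₀def
  have hp₀pos : 0 < p₀ := hppos tm htm
  have hPpos : 0 < P := hppos tM htM
  have ha₀pos : 0 < a₀ := hapos sm hsm
  have hp₀le : ∀ t ∈ Icc (0:ℝ) T, p₀ ≤ p t := fun t ht => hminp ht
  have hPle : ∀ t ∈ Icc (0:ℝ) T, p t ≤ P := fun t ht => hmaxp ht
  have ha₀le : ∀ t ∈ Icc (0:ℝ) T, a₀ ≤ a t := fun t ht => hmina ht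
  have hp₀P : p₀ ≤ P := hPle tm htm
  -- the basic scale
  set b : ℝ := min ξ₀ 1 with hbdef
  have hb : 0 < b := lt_min hξ₀ one_pos
  have hb1 : b ≤ 1 := min_le_right _ _
  have hbξ : b ≤ ξ₀ := min_le_left _ _
  set xh : ℝ := b / 2 with hxhdef
  have hxhpos : 0 < xh := by positivity
  have hxhb : xh < b := half_lt_self hb
  have hxhξ : xh < ξ₀ := lt_of_lt_of_le hxhb hbξ
  -- φ basics
  have hφnonneg : ∀ x : ℝ, 0 ≤ x → 0 ≤ φ x := by
    intro x hx
    rcases eq_or_lt_of_le hx with h | h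
    · rw [← h, hφ0]
    · exact (hφpos x h).le
  have hφmono : MonotoneOn φ (Ici 0) := by
    apply monotoneOn_of_deriv_nonneg (convex_Ici 0) hφc
    · intro x hx
      rw [interior_Ici] at hx
      exact ((hφd x hx).differentiableAt).differentiableWithinAt
    · intro x hx
      rw [interior_Ici] at hx
      rw [(hφd x hx).deriv]
      exact (hφ'pos x hx).le
  have hφsm : StrictMonoOn φ (Icc 0 b) := by
    apply strictMonoOn_of_deriv_pos (convex_Icc 0 b) (hφc.mono (Icc_subset_Ici_self))
    intro x hx
    rw [interior_Icc] at hx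
    rw [(hφd x hx.1).deriv]
    exact hφ'pos x hx.1
  -- f basics
  have hf0 : 0 ≤ f 0 := by
    have h1 : Tendsto f (𝓝[>] (0:ℝ)) (𝓝 (f 0)) :=
      (hfc.continuousAt.continuousWithinAt (s := Ioi 0)).tendsto
    refine ge_of_tendsto h1 ?_
    filter_upwards [Ioo_mem_nhdsGT_of_mem (by constructor <;> [exact le_rfl; exact hη₀] : (0:ℝ) ∈ Ico 0 η₀)] with x hx
    exact (hfpos x hx).le
  have hfnonneg : ∀ x : ℝ, 0 ≤ x → x < η₀ → 0 ≤ f x := by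
    intro x hx hx'
    rcases eq_or_lt_of_le hx with h | h
    · rwa [← h]
    · exact (hfpos x ⟨h, hx'⟩).le
  -- l basics
  have hlnonneg : ∀ x : ℝ, 0 ≤ x → 0 ≤ l x := by
    intro x hx
    rcases eq_or_lt_of_le hx with h | h
    · rw [← h]
      have h1 : Tendsto l (𝓝[>] (0:ℝ)) (𝓝 (l 0)) := by
        have := (hlc 0 (by exact self_mem_Ici)).tendsto
        exact this.mono_left (nhdsWithin_mono 0 (Ioi_subset_Ici le_rfl))
      refine ge_of_tendsto h1 ?_
      filter_upwards [self_mem_nhdsWithin] with x hx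
      exact (hlpos x hx).le
    · exact (hlpos x h).le
  -- F basics
  have hFder : ∀ u : ℝ, HasDerivAt F (f u) u := by
    intro u
    have : HasDerivAt (fun u => ∫ s in (0:ℝ)..u, f s) (f u) u :=
      intervalIntegral.integral_hasDerivAt_right (hfc.intervalIntegrable 0 u)
        (hfc.stronglyMeasurableAtFilter volume (𝓝 u)) hfc.continuousAt
    have heq : F = fun u => ∫ s in (0:ℝ)..u, f s := funext hF
    rw [heq]
    exact this
  have hFcont : Continuous F := by
    have : Differentiable ℝ F := fun u => (hFder u).differentiableAt
    exact this.continuous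
  have hF0 : F 0 = 0 := by rw [hF 0, intervalIntegral.integral_same]
  have hFmono : ∀ x y : ℝ, 0 ≤ x → x ≤ y → y < η₀ → F x ≤ F y := by
    intro x y hx hxy hy
    rw [hF x, hF y]
    rw [← sub_nonneg, intervalIntegral.integral_interval_sub_left
      (hfc.intervalIntegrable 0 y) (hfc.intervalIntegrable 0 x)]
    apply intervalIntegral.integral_nonneg hxy
    intro u hu
    exact hfnonneg u (le_trans hx hu.1) (lt_of_le_of_lt hu.2 hy)
  have hFpos : ∀ u : ℝ, 0 < u → u < η₀ → 0 < F u := by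
    intro u hu hu'
    rw [hF u]
    apply intervalIntegral.intervalIntegral_pos_of_pos_on (hfc.intervalIntegrable 0 u) _ hu
    intro x hx
    exact hfpos x ⟨hx.1, lt_trans hx.2 hu'⟩
  have hFnonneg : ∀ u : ℝ, 0 ≤ u → u < η₀ → 0 ≤ F u := by
    intro u hu hu'
    rcases eq_or_lt_of_le hu with h | h
    · rw [← h, hF0]
    · exact (hFpos u h hu').le
  -- q and K basics
  set q : ℝ → ℝ := fun s => s * φ' s / l s with hqdef
  have hqcont : ContinuousOn q (Ioi 0) := by
    apply ContinuousOn.div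
    · exact (continuousOn_id.mul hφ'c)
    · exact hlc.mono (Ioi_subset_Ici le_rfl)
    · intro x hx
      exact (hlpos x hx).ne'
  have hqpos : ∀ s : ℝ, 0 < s → 0 < q s := by
    intro s hs
    have := hφ'pos s hs
    have := hlpos s hs
    positivity
  have hqOn : ∀ x : ℝ, x ≤ b → IntegrableOn q (Ioo 0 x) := by
    intro x hx
    exact hint.mono_set (Ioo_subset_Ioo le_rfl (le_trans hx hb1))
  have hqii : ∀ x : ℝ, 0 ≤ x → x ≤ b → IntervalIntegrable q volume 0 x := by
    intro x hx0 hxb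
    rw [intervalIntegrable_iff_integrableOn_Ioc_of_le hx0]
    exact (hqOn x hxb).congr_set_ae (Ioo_ae_eq_Ioc).symm
  have hqii' : ∀ x y : ℝ, 0 ≤ x → x ≤ y → y ≤ b → IntervalIntegrable q volume x y := by
    intro x y hx hxy hyb
    apply (hqii y (le_trans hx hxy) hyb).mono_set
    rw [uIcc_of_le hxy, uIcc_of_le (le_trans hx hxy)]
    exact Icc_subset_Icc hx le_rfl
  have hKfun : K = fun x => ∫ s in (0:ℝ)..x, q s := funext hK
  have hK0 : K 0 = 0 := by rw [hK 0, intervalIntegral.integral_same]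
  have hKder : ∀ x : ℝ, 0 < x → x ≤ b → HasDerivAt K (q x) x := by
    intro x hx hxb
    rw [hKfun]
    exact intervalIntegral.integral_hasDerivAt_right (hqii x hx.le hxb)
      (hqcont.stronglyMeasurableAtFilter isOpen_Ioi x hx) ((hqcont x hx).continuousAt
        (Ioi_mem_nhds hx))
  have hKcont : ContinuousOn K (Icc 0 b) := by
    rw [hKfun]
    have hIcc : IntegrableOn q (uIcc 0 b) := by
      rw [uIcc_of_le hb.le]
      exact ((hqOn b le_rfl).congr_set_ae (Ioo_ae_eq_Icc).symm)
    have := intervalIntegral.continuousOn_primitive_interval hIcc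
    rwa [uIcc_of_le hb.le] at this
  have hKsm : StrictMonoOn K (Icc 0 b) := by
    intro x hx y hy hxy
    have key : K y - K x = ∫ s in x..y, q s := by
      rw [hK x, hK y]
      rw [intervalIntegral.integral_interval_sub_left
        (hqii y hy.1 hy.2) (hqii x hx.1 hx.2)]
    have hpos : 0 < ∫ s in x..y, q s := by
      apply intervalIntegral.intervalIntegral_pos_of_pos_on
        (hqii' x y hx.1 hxy.le hy.2) _ hxy
      intro s hs
      exact hqpos s (lt_of_le_of_lt hx.1 hs.1)
    linarith
  have hKxhpos : 0 < K xh := by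
    have := hKsm (left_mem_Icc.2 hb.le) ⟨hxhpos.le, hxhb.le⟩ hxhpos
    rwa [hK0] at this
  have hKnonneg : ∀ x ∈ Icc (0:ℝ) b, 0 ≤ K x := by
    intro x hx
    rcases eq_or_lt_of_le hx.1 with h | h
    · rw [← h, hK0]
    · have := hKsm (left_mem_Icc.2 hb.le) hx h
      rw [hK0] at this
      exact this.le
  -- inverse functions
  obtain ⟨Gφ, Eφ, hGφc, hGφm, hGφ0, hEφeq, hEφG, hGφF, hφGφ⟩ :=
    exists_global_inverse φ b hb (hφc.mono Icc_subset_Ici_self) hφsm hφ0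
  obtain ⟨ρ, EK, hρc, hρm, hρ0, hEKeq, hEKρ, hρK, hKρ⟩ :=
    exists_global_inverse K b hb hKcont hKsm hK0
  -- constants β and k
  set β : ℝ := min 1 (p₀ * a₀ / (P * C ^ 2)) with hβdef
  have hβpos : 0 < β := by
    apply lt_min one_pos
    positivity
  have hβ1 : β ≤ 1 := min_le_left _ _
  obtain ⟨k, hk⟩ : ∃ k : ℕ, 1 / β < (1 + 1 / C ^ 2) ^ k := by
    apply pow_unbounded_of_one_lt
    have : 0 < 1 / C ^ 2 := by positivity
    linarith
  have h2kpos : (0:ℝ) < 2 ^ k := by positivity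
  have h2k1 : (1:ℝ) ≤ 2 ^ k := one_le_pow₀ (by norm_num)
  -- the dilation estimate
  have hdil1 : ∀ x : ℝ, 0 < x → 2 * x < η₀ → (1 + 1 / C ^ 2) * F x ≤ F (2 * x) := by
    intro x hx h2x
    have hxη : x < η₀ := by linarith
    have hfx : 0 < f x := hfpos x ⟨hx, hxη⟩
    have step1 : F (2 * x) - F x = ∫ u in x..(2*x), f u := by
      rw [hF x, hF (2*x), intervalIntegral.integral_interval_sub_left
        (hfc.intervalIntegrable 0 (2*x)) (hfc.intervalIntegrable 0 x)]
    have step2 : x * (f x / C) ≤ ∫ u in x..(2*x), f u := by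
      have hle : ∀ u ∈ Icc x (2*x), f x / C ≤ f u := by
        intro u hu
        have hu' : u ∈ Ioo (0:ℝ) η₀ := ⟨lt_of_lt_of_le hx hu.1, lt_of_le_of_lt hu.2 h2x⟩
        have := hfCinc x ⟨hx, hxη⟩ u hu' hu.1
        rw [div_le_iff₀ hC0]
        linarith [this]
      calc x * (f x / C) = ∫ _ in x..(2*x), (f x / C) := by
            rw [intervalIntegral.integral_const, smul_eq_mul]
            ring
        _ ≤ ∫ u in x..(2*x), f u := by
            apply intervalIntegral.integral_mono_on (by linarith)
              (intervalIntegrable_const) (hfc.intervalIntegrable _ _) hle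
    have step3 : F x ≤ C * x * f x := by
      have h1 : F x = ∫ u in Ioo (0:ℝ) x, f u := by
        rw [hF x, intervalIntegral.integral_of_le hx.le]
        exact (setIntegral_congr_set Ioo_ae_eq_Ioc.symm)
      have h2 : ∫ u in Ioo (0:ℝ) x, f u ≤ ∫ _ in Ioo (0:ℝ) x, C * f x := by
        apply setIntegral_mono_on
        · exact (hfc.continuousOn).integrableOn_compact isCompact_Icc |>.mono_set Ioo_subset_Icc_self
        · exact integrableOn_const measure_Ioo_lt_top.ne
        · exact measurableSet_Ioo
        · intro u hu
          exact hfCinc u ⟨hu.1, lt_trans hu.2 hxη⟩ x ⟨hx, hxη⟩ hu.2.le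
      have h3 : ∫ _ in Ioo (0:ℝ) x, C * f x = x * (C * f x) := by
        rw [setIntegral_const, measureReal_def, Real.volume_Ioo, smul_eq_mul]
        rw [ENNReal.toReal_ofReal (by linarith)]
        ring
      calc F x ≤ x * (C * f x) := by rw [h1]; rw [h3] at h2; exact h2
        _ = C * x * f x := by ring
    have hCC : 0 < C ^ 2 := by positivity
    have key : (1 / C ^ 2) * F x ≤ x * (f x / C) := by
      rw [div_mul_eq_mul_div, div_le_iff₀ hCC]
      calc 1 * F x ≤ C * x * f x := by rw [one_mul]; exact step3
        _ = (x * (f x / C)) * C ^ 2 := by field_simp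
    linarith
  have hdil : ∀ s : ℝ, 0 < s → s < η₀ → F (s / 2 ^ k) ≤ β * F s := by
    intro s hs hsη
    have key : ∀ j : ℕ, (1 + 1 / C ^ 2) ^ j * F (s / 2 ^ j) ≤ F s := by
      intro j
      induction j with
      | zero => simp
      | succ n ih =>
        have hx : 0 < s / 2 ^ (n+1) := by positivity
        have h2x : 2 * (s / 2 ^ (n+1)) = s / 2 ^ n := by
          field_simp
          ring
        have h2xη : 2 * (s / 2 ^ (n+1)) < η₀ := by
          rw [h2x]
          have h1 : s / 2 ^ n ≤ s := by
            apply div_le_self hs.le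
            exact one_le_pow₀ (by norm_num)
          linarith
        have := hdil1 _ hx h2xη
        rw [h2x] at this
        have hmul : (1 + 1/C^2)^(n+1) * F (s / 2^(n+1)) ≤ (1 + 1/C^2)^n * F (s/2^n) := by
          rw [pow_succ]
          have hpow : (0:ℝ) ≤ (1 + 1/C^2)^n := by positivity
          calc (1 + 1/C^2)^n * (1 + 1/C^2) * F (s / 2^(n+1))
              = (1 + 1/C^2)^n * ((1 + 1/C^2) * F (s / 2^(n+1))) := by ring
            _ ≤ (1 + 1/C^2)^n * F (s/2^n) := by
                apply mul_le_mul_of_nonneg_left this hpow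
        exact le_trans hmul ih
    have hFs2k : 0 ≤ F (s / 2 ^ k) := by
      apply hFnonneg
      · positivity
      · calc s / 2 ^ k ≤ s := div_le_self hs.le h2k1
          _ < η₀ := hsη
    have h1 : (1 / β) * F (s / 2 ^ k) ≤ (1 + 1/C^2)^k * F (s / 2^k) := by
      apply mul_le_mul_of_nonneg_right hk.le hFs2k
    have h2 := le_trans h1 (key k)
    rw [div_mul_eq_mul_div, div_le_iff₀ hβpos] at h2 <;> try exact h2
    calc F (s / 2^k) = (F (s/2^k) * 1) / 1 := by ring
      _ ≤ β * F s := by nlinarith [h2]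
  -- threshold δφ from continuity of φ at 0
  have hφxh : 0 < φ xh := hφpos xh hxhpos
  have htgtφ : 0 < φ xh * (p₀ / P) := by positivity
  obtain ⟨δφ, hδφpos, hδφ⟩ : ∃ δ : ℝ, 0 < δ ∧ ∀ y : ℝ, 0 ≤ y → y < δ → φ y < φ xh * (p₀ / P) := by
    have h1 : Tendsto φ (𝓝[Ici 0] 0) (𝓝 0) := by
      have := hφc 0 self_mem_Ici
      rwa [ContinuousWithinAt, hφ0] at this
    have hev : ∀ᶠ y in 𝓝[Ici 0] (0:ℝ), φ y < φ xh * (p₀ / P) :=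
      h1.eventually_lt_const htgtφ
    rw [eventually_nhdsWithin_iff] at hev
    rw [Metric.eventually_nhds_iff] at hev
    obtain ⟨δ, hδpos, hδ⟩ := hev
    refine ⟨δ, hδpos, fun y hy0 hyδ => ?_⟩
    apply hδ _ hy0
    rw [Real.dist_eq, sub_zero, abs_of_nonneg hy0]
    exact hyδ
  -- threshold δF from continuity of F at 0
  obtain ⟨δF, hδFpos, hδF⟩ : ∃ δ : ℝ, 0 < δ ∧ ∀ y : ℝ, 0 ≤ y → y ≤ δ → F y ≤ K xh := by
    have h1 : Tendsto F (𝓝 0) (𝓝 0) := by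
      have := hFcont.continuousAt (x := (0:ℝ))
      rwa [ContinuousAt, hF0] at this
    have hev : ∀ᶠ y in 𝓝 (0:ℝ), F y < K xh := h1.eventually_lt_const hKxhpos
    rw [Metric.eventually_nhds_iff] at hev
    obtain ⟨δ, hδpos, hδ⟩ := hev
    refine ⟨δ / 2, by positivity, fun y hy0 hyδ => ?_⟩
    refine le_of_lt (hδ ?_)
    rw [Real.dist_eq, sub_zero, abs_of_nonneg hy0]
    linarith
  -- combined threshold
  set δb : ℝ := min (min ε (δφ * T / 2)) δF with hδbdef
  have hδbpos : 0 < δb := by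
    apply lt_min (lt_min hεmem.1 (by positivity)) hδFpos
  have hδbε : δb ≤ ε := le_trans (min_le_left _ _) (min_le_left _ _)
  have hδbφ : δb ≤ δφ * T / 2 := le_trans (min_le_left _ _) (min_le_right _ _)
  have hδbF : δb ≤ δF := min_le_right _ _
  have hδbη₀ : δb < η₀ := lt_of_le_of_lt hδbε hεmem.2
  -- transfer of the Keller-Osserman integrability to our inverse ρ
  have hKxhKb : K xh ≤ K b :=
    (hKsm.monotoneOn) ⟨hxhpos.le, hxhb.le⟩ ⟨hb.le, le_rfl⟩ hxhb.le
  have hFinKb : ∀ u : ℝ, 0 ≤ u → u ≤ δb → F u ∈ Icc 0 (K b) := by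
    intro u hu0 huδ
    refine ⟨hFnonneg u hu0 (lt_of_le_of_lt huδ hδbη₀), ?_⟩
    exact le_trans (hδF u hu0 (le_trans huδ hδbF)) hKxhKb
  have hρFid : ∀ u : ℝ, 0 ≤ u → u ≤ δb → Kinv (F u) = ρ (F u) := by
    intro u hu0 huδ
    have h1 : K (ρ (F u)) = F u := hKρ (F u) (hFinKb u hu0 huδ)
    have h2 : 0 ≤ ρ (F u) := by
      rw [← hρ0]
      exact hρm.monotone (hFinKb u hu0 huδ).1
    conv_lhs => rw [← h1]
    exact hKinv _ h2
  have hHρint : IntegrableOn (fun u => (ρ (F u))⁻¹) (Ioo 0 δb) := by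
    have h1 : IntegrableOn (fun u => 1 / Kinv (F u)) (Ioo 0 δb) :=
      hKOint.mono_set (Ioo_subset_Ioo le_rfl hδbε)
    apply h1.congr_fun _ measurableSet_Ioo
    intro u hu
    show 1 / Kinv (F u) = (ρ (F u))⁻¹
    rw [one_div, hρFid u hu.1.le hu.2.le]
  -- choice of η₁
  set κ : ℝ → ℝ := fun x => ∫ u in Ioc 0 x, (ρ (F u))⁻¹ with hκdef
  have hκcont : ContinuousOn κ (Icc 0 δb) := by
    apply intervalIntegral.continuousOn_primitive
    exact hHρint.congr_set_ae (Ioo_ae_eq_Icc).symm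
  have hκ0 : κ 0 = 0 := by
    simp [hκdef]
  obtain ⟨η₁, hη₁mem, hη₁κ⟩ : ∃ η₁ : ℝ, η₁ ∈ Ioc (0:ℝ) δb ∧ κ η₁ < (T / 2) / 2 ^ k := by
    have h1 : Tendsto κ (𝓝[Icc 0 δb] 0) (𝓝 0) := by
      have := hκcont 0 (left_mem_Icc.2 hδbpos.le)
      rwa [ContinuousWithinAt, hκ0] at this
    have h2 : Tendsto κ (𝓝[>] (0:ℝ)) (𝓝 0) := by
      rw [← nhdsWithin_Ioc_eq_nhdsGT hδbpos]
      exact h1.mono_left (nhdsWithin_mono 0 Ioc_subset_Icc_self)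
    have h3 : ∀ᶠ x in 𝓝[>] (0:ℝ), κ x < (T / 2) / 2 ^ k :=
      h2.eventually_lt_const (by positivity)
    have h4 : ∀ᶠ x in 𝓝[>] (0:ℝ), x ∈ Ioc (0:ℝ) δb :=
      Ioc_mem_nhdsGT_of_mem ⟨le_rfl, hδbpos⟩
    obtain ⟨x, hx1, hx2⟩ := (h3.and h4).exists
    exact ⟨x, hx2, hx1⟩
  refine ⟨η₁, ⟨hη₁mem.1, le_trans hη₁mem.2 (le_of_lt hδbη₀)⟩, ?_⟩
  intro η hη w w' hw hw'c hw0 hwT hbounds hode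
  by_contra hne
  have hc : 0 < w' 0 := lt_of_le_of_ne (hbounds 0 h0T).2.2 (Ne.symm hne)
  have hη0 : 0 < η := hη.1
  have hηlt : η < η₁ := hη.2
  have hηδb : η < δb := lt_of_lt_of_le hηlt hη₁mem.2
  have hηη₀ : η < η₀ := lt_trans hηδb hδbη₀
  have hwc : ContinuousOn w (Icc 0 T) := fun t ht => (hw t ht).continuousWithinAt
  have hw'nonneg : ∀ t ∈ Icc (0:ℝ) T, 0 ≤ w' t := fun t ht => (hbounds t ht).2.2
  set g : ℝ → ℝ := fun s => p s * φ (w' s) with hgdef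
  have hgc : ContinuousOn g (Icc 0 T) :=
    hpc.mul (hφc.comp hw'c (fun t ht => hw'nonneg t ht))
  have hgd : ∀ t ∈ Ioo (0:ℝ) T, HasDerivAt g (p t * a t * f (w t) * l (w' t)) t := by
    intro t ht
    have := hode t ht
    rwa [abs_of_nonneg (hw'nonneg t (Ioo_subset_Icc_self ht))] at this
  have hgderiv_nonneg : ∀ t ∈ Ioo (0:ℝ) T, 0 ≤ p t * a t * f (w t) * l (w' t) := by
    intro t ht
    have htmem := Ioo_subset_Icc_self ht
    have h1 := (hppos t htmem).le
    have h2 := (hapos t htmem).le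
    have h3 := hfnonneg (w t) (hbounds t htmem).1
      (lt_of_le_of_lt (hbounds t htmem).2.1 hηη₀)
    have h4 := hlnonneg (w' t) (hw'nonneg t htmem)
    positivity
  have hgmono : MonotoneOn g (Icc 0 T) := by
    apply monotoneOn_of_deriv_nonneg (convex_Icc 0 T) hgc
    · intro t ht
      rw [interior_Icc] at ht
      exact (hgd t ht).differentiableAt.differentiableWithinAt
    · intro t ht
      rw [interior_Icc] at ht
      rw [(hgd t ht).deriv]
      exact hgderiv_nonneg t ht
  have hg0pos : 0 < g 0 := mul_pos (hppos 0 h0T) (hφpos _ hc)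
  have hgnonneg : ∀ t ∈ Icc (0:ℝ) T, 0 ≤ g t := fun t ht =>
    mul_nonneg (hppos t ht).le (hφnonneg _ (hw'nonneg t ht))
  have hT2pos : 0 < T / 2 := by linarith
  have hT2T : T / 2 < T := by linarith
  have hT2mem : T / 2 ∈ Icc (0:ℝ) T := ⟨hT2pos.le, hT2T.le⟩
  have hIccsub : Icc (0:ℝ) (T/2) ⊆ Icc (0:ℝ) T := Icc_subset_Icc le_rfl hT2T.le
  -- Mean value theorem on [T/2, T]
  obtain ⟨τ, hτmem, hτslope⟩ :=
    exists_hasDerivAt_eq_slope w w' hT2T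
      (hwc.mono (Icc_subset_Icc hT2pos.le le_rfl))
      (fun x hx => (hw x ⟨le_trans hT2pos.le hx.1.le, hx.2.le⟩).hasDerivAt
        (Icc_mem_nhds (lt_of_lt_of_le hT2pos hx.1.le) hx.2))
  have hτIcc : τ ∈ Icc (0:ℝ) T := ⟨le_trans hT2pos.le hτmem.1.le, hτmem.2.le⟩
  have hw'τ : w' τ < δφ := by
    have hwT2 : 0 ≤ w (T/2) := (hbounds _ hT2mem).1
    rw [hwT] at hτslope
    have hTT2 : T - T/2 = T/2 := by ring
    have h1 : w' τ ≤ η / (T/2) := by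
      rw [hτslope, hTT2]
      gcongr
      linarith
    have h2 : η / (T/2) < δφ := by
      rw [div_lt_iff₀ hT2pos]
      have : η₁ ≤ δφ * T / 2 := le_trans hη₁mem.2 hδbφ
      calc η < η₁ := hηlt
        _ ≤ δφ * T / 2 := this
        _ = δφ * (T/2) := by ring
    linarith
  -- uniform velocity bound on [0, T/2]
  have hgbound : ∀ t ∈ Icc (0:ℝ) (T/2), g t < p₀ * φ xh := by
    intro t ht
    have htI : t ∈ Icc (0:ℝ) T := hIccsub ht
    have h1 : g t ≤ g τ := hgmono htI hτIcc (le_trans ht.2 hτmem.1.le)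
    have h3 : φ (w' τ) < φ xh * (p₀ / P) := hδφ _ (hw'nonneg τ hτIcc) hw'τ
    have h4 : p τ ≤ P := hPle τ hτIcc
    have h5 : 0 ≤ φ (w' τ) := hφnonneg _ (hw'nonneg τ hτIcc)
    calc g t ≤ p τ * φ (w' τ) := h1
      _ ≤ P * φ (w' τ) := mul_le_mul_of_nonneg_right h4 h5
      _ < P * (φ xh * (p₀ / P)) := by exact mul_lt_mul_of_pos_left h3 hPpos
      _ = p₀ * φ xh := by field_simp
  have hφw'lt : ∀ t ∈ Icc (0:ℝ) (T/2), φ (w' t) < φ xh := by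
    intro t ht
    have htI : t ∈ Icc (0:ℝ) T := hIccsub ht
    have h1 : p₀ * φ (w' t) ≤ p t * φ (w' t) :=
      mul_le_mul_of_nonneg_right (hp₀le t htI) (hφnonneg _ (hw'nonneg t htI))
    have h2 : p t * φ (w' t) < p₀ * φ xh := hgbound t ht
    have h3 : p₀ * φ (w' t) < p₀ * φ xh := lt_of_le_of_lt h1 h2
    exact lt_of_mul_lt_mul_left h3 hp₀pos.le
  have hw'xh : ∀ t ∈ Icc (0:ℝ) (T/2), w' t < xh := by
    intro t ht
    by_contra hcon
    push_neg at hcon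
    have : φ xh ≤ φ (w' t) :=
      hφmono (mem_Ici.2 hxhpos.le) (mem_Ici.2 (hw'nonneg t (hIccsub ht))) hcon
    linarith [hφw'lt t ht]
  -- the comparison velocity v
  set v : ℝ → ℝ := fun s => Gφ (g s / P) with hvdef
  have hvc : ContinuousOn v (Icc 0 T) := hGφc.comp_continuousOn (hgc.div_const P)
  have hvmono : MonotoneOn v (Icc 0 T) := by
    intro x hx y hy hxy
    refine hGφm.monotone ?_
    gcongr
    exact hgmono hx hy hxy
  have hv0pos : 0 < v 0 := by
    have h1 : (0:ℝ) < g 0 / P := by positivity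
    have := hGφm h1
    rwa [hGφ0] at this
  have hvpos : ∀ t ∈ Icc (0:ℝ) T, 0 < v t := fun t ht =>
    lt_of_lt_of_le hv0pos (hvmono h0T ht ht.1)
  have hφxhb : φ xh ≤ φ b := hφsm.monotoneOn ⟨hxhpos.le, hxhb.le⟩ ⟨hb.le, le_rfl⟩ hxhb.le
  have hgPlt : ∀ t ∈ Icc (0:ℝ) (T/2), g t / P < φ xh := by
    intro t ht
    rw [div_lt_iff₀ hPpos]
    calc g t < p₀ * φ xh := hgbound t ht
      _ ≤ P * φ xh := mul_le_mul_of_nonneg_right hp₀P hφxh.le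
      _ = φ xh * P := by ring
  have hgPmem : ∀ t ∈ Icc (0:ℝ) (T/2), g t / P ∈ Icc 0 (φ b) := by
    intro t ht
    refine ⟨div_nonneg (hgnonneg t (hIccsub ht)) hPpos.le, ?_⟩
    exact le_trans (hgPlt t ht).le hφxhb
  have hφv : ∀ t ∈ Icc (0:ℝ) (T/2), φ (v t) = g t / P := fun t ht =>
    hφGφ _ (hgPmem t ht)
  have hvxh : ∀ t ∈ Icc (0:ℝ) (T/2), v t ≤ xh := by
    intro t ht
    have h2 : Gφ (g t / P) ≤ Gφ (φ xh) := hGφm.monotone (hgPlt t ht).le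
    rwa [hGφF xh ⟨hxhpos.le, hxhb.le⟩] at h2
  have hvle : ∀ t ∈ Icc (0:ℝ) (T/2), v t ≤ w' t := by
    intro t ht
    have htI : t ∈ Icc (0:ℝ) T := hIccsub ht
    by_contra hcon
    push_neg at hcon
    have h1 : φ (w' t) < φ (v t) :=
      hφsm ⟨hw'nonneg t htI, le_trans (hw'xh t ht).le hxhb.le⟩
        ⟨(hvpos t htI).le, le_trans (hvxh t ht) hxhb.le⟩ hcon
    rw [hφv t ht] at h1
    have h3 : g t ≤ φ (w' t) * P := by
      calc g t = p t * φ (w' t) := rfl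
        _ ≤ P * φ (w' t) := mul_le_mul_of_nonneg_right (hPle t htI)
            (hφnonneg _ (hw'nonneg t htI))
        _ = φ (w' t) * P := by ring
    rw [lt_div_iff₀ hPpos] at h1
    linarith
  -- the comparison position z
  set z : ℝ → ℝ := fun t => ∫ s in (0:ℝ)..t, v s with hzdef
  have hvii : ∀ x y : ℝ, x ∈ Icc (0:ℝ) T → y ∈ Icc (0:ℝ) T →
      IntervalIntegrable v volume x y := by
    intro x y hx hy
    apply ContinuousOn.intervalIntegrable
    apply hvc.mono
    exact uIcc_subset_Icc hx hy
  have hz0 : z 0 = 0 := intervalIntegral.integral_same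
  have hzd : ∀ t ∈ Ioo (0:ℝ) T, HasDerivAt z (v t) t := by
    intro t ht
    apply intervalIntegral.integral_hasDerivAt_right
      (hvii 0 t h0T (Ioo_subset_Icc_self ht))
    · exact ⟨Ioo 0 T, Ioo_mem_nhds ht.1 ht.2,
        (hvc.mono Ioo_subset_Icc_self).aestronglyMeasurable measurableSet_Ioo⟩
    · exact hvc.continuousAt (Icc_mem_nhds ht.1 ht.2)
  have hzsub : ∀ x y : ℝ, x ∈ Icc (0:ℝ) T → y ∈ Icc (0:ℝ) T →
      z y - z x = ∫ s in x..y, v s := by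
    intro x y hx hy
    rw [hzdef]
    simp only
    rw [intervalIntegral.integral_interval_sub_left (hvii 0 y h0T hy) (hvii 0 x h0T hx)]
  have hzmono : MonotoneOn z (Icc 0 T) := by
    intro x hx y hy hxy
    have h1 : 0 ≤ ∫ s in x..y, v s := by
      apply intervalIntegral.integral_nonneg hxy
      intro u hu
      exact (hvpos u ⟨le_trans hx.1 hu.1, le_trans hu.2 hy.2⟩).le
    have := hzsub x y hx hy
    linarith
  have hzcont : ContinuousOn z (Icc 0 T) := by
    have hi : IntegrableOn v (uIcc 0 T) := by
      rw [uIcc_of_le hT.le]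
      exact hvc.integrableOn_compact isCompact_Icc
    have := intervalIntegral.continuousOn_primitive_interval hi
    rwa [uIcc_of_le hT.le] at this
  have hzw : ∀ t ∈ Icc (0:ℝ) (T/2), z t ≤ w t := by
    have hD : MonotoneOn (fun s => w s - z s) (Icc 0 (T/2)) := by
      apply monotoneOn_of_deriv_nonneg (convex_Icc _ _)
        ((hwc.mono hIccsub).sub (hzcont.mono hIccsub))
      · intro t ht
        rw [interior_Icc] at ht
        have htIoo : t ∈ Ioo (0:ℝ) T := ⟨ht.1, lt_trans ht.2 hT2T⟩
        exact (((hw t (Ioo_subset_Icc_self htIoo)).hasDerivAt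
          (Icc_mem_nhds htIoo.1 htIoo.2)).sub (hzd t htIoo)).differentiableAt.differentiableWithinAt
      · intro t ht
        rw [interior_Icc] at ht
        have htIoo : t ∈ Ioo (0:ℝ) T := ⟨ht.1, lt_trans ht.2 hT2T⟩
        rw [(((hw t (Ioo_subset_Icc_self htIoo)).hasDerivAt
          (Icc_mem_nhds htIoo.1 htIoo.2)).sub (hzd t htIoo)).deriv]
        have := hvle t (Ioo_subset_Icc_self ht)
        linarith
    intro t ht
    have h1 := hD (left_mem_Icc.2 hT2pos.le) ht ht.1
    simp only [hw0, hz0, sub_zero] at h1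
    linarith [h1]
  have hzpos : ∀ t ∈ Ioc (0:ℝ) (T/2), 0 < z t := by
    intro t ht
    have htI : t ∈ Icc (0:ℝ) T := ⟨ht.1.le, le_trans ht.2 hT2T.le⟩
    have h1 : ∫ s in (0:ℝ)..t, v 0 ≤ ∫ s in (0:ℝ)..t, v s := by
      apply intervalIntegral.integral_mono_on ht.1.le
        intervalIntegrable_const (hvii 0 t h0T htI)
      intro u hu
      exact hvmono h0T ⟨hu.1, le_trans hu.2 htI.2⟩ hu.1
    rw [intervalIntegral.integral_const, smul_eq_mul, sub_zero] at h1
    have h2 : 0 < t * v 0 := mul_pos ht.1 hv0pos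
    calc (0:ℝ) < t * v 0 := h2
      _ ≤ z t := h1
  have hzη : ∀ t ∈ Icc (0:ℝ) (T/2), z t ≤ η := fun t ht =>
    le_trans (hzw t ht) ((hbounds t (hIccsub ht)).2.1)
  -- energy estimate: β F(z t) ≤ K (v t) on [0, T/2]
  have hβle' : β * (P * C ^ 2) ≤ p₀ * a₀ := by
    have h1 : β ≤ p₀ * a₀ / (P * C ^ 2) := min_le_right _ _
    rw [le_div_iff₀ (by positivity)] at h1
    exact h1
  have hvder : ∀ t ∈ Ioo (0:ℝ) (T/2),
      HasDerivAt v ((φ' (v t))⁻¹ * ((p t * a t * f (w t) * l (w' t)) / P)) t := by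
    intro t ht
    have htI2 : t ∈ Icc (0:ℝ) (T/2) := Ioo_subset_Icc_self ht
    have htIoo : t ∈ Ioo (0:ℝ) T := ⟨ht.1, lt_trans ht.2 hT2T⟩
    have hvt_pos : 0 < v t := hvpos t (hIccsub htI2)
    have hvt_b : v t < b := lt_of_le_of_lt (hvxh t htI2) hxhb
    have hEφd : HasDerivAt Eφ (φ' (v t)) (v t) := by
      have hloc : Eφ =ᶠ[𝓝 (v t)] φ := by
        filter_upwards [Ioo_mem_nhds hvt_pos hvt_b] with x hx
        exact hEφeq x (Ioo_subset_Icc_self hx)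
      exact (hφd (v t) hvt_pos).congr_of_eventuallyEq hloc
    have hGd : HasDerivAt Gφ (φ' (v t))⁻¹ (g t / P) := by
      apply HasDerivAt.of_local_left_inverse hGφc.continuousAt hEφd
        (ne_of_gt (hφ'pos _ hvt_pos))
      exact Filter.Eventually.of_forall hEφG
    have hinner : HasDerivAt (fun s => g s / P)
        ((p t * a t * f (w t) * l (w' t)) / P) t := (hgd t htIoo).div_const P
    exact hGd.comp t hinner
  have hEng : ∀ t ∈ Icc (0:ℝ) (T/2), β * F (z t) ≤ K (v t) := by
    have hDder : ∀ t ∈ Ioo (0:ℝ) (T/2),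
        HasDerivAt (fun s => K (v s) - β * F (z s))
          (q (v t) * ((φ' (v t))⁻¹ * ((p t * a t * f (w t) * l (w' t)) / P))
            - β * (f (z t) * v t)) t := by
      intro t ht
      have htI2 : t ∈ Icc (0:ℝ) (T/2) := Ioo_subset_Icc_self ht
      have htIoo : t ∈ Ioo (0:ℝ) T := ⟨ht.1, lt_trans ht.2 hT2T⟩
      have hvt_pos : 0 < v t := hvpos t (hIccsub htI2)
      have hvt_b : v t < b := lt_of_le_of_lt (hvxh t htI2) hxhb
      have hKvd : HasDerivAt (fun s => K (v s))
          (q (v t) * ((φ' (v t))⁻¹ * ((p t * a t * f (w t) * l (w' t)) / P))) t :=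
        (hKder (v t) hvt_pos hvt_b.le).comp t (hvder t ht)
      have hFzd : HasDerivAt (fun s => F (z s)) (f (z t) * v t) t :=
        (hFder (z t)).comp t (hzd t htIoo)
      exact hKvd.sub (hFzd.const_mul β)
    have hval : ∀ t ∈ Ioo (0:ℝ) (T/2), β * (f (z t) * v t) ≤
        q (v t) * ((φ' (v t))⁻¹ * ((p t * a t * f (w t) * l (w' t)) / P)) := by
      intro t ht
      have htI2 : t ∈ Icc (0:ℝ) (T/2) := Ioo_subset_Icc_self ht
      have htI : t ∈ Icc (0:ℝ) T := hIccsub htI2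
      have hvt_pos : 0 < v t := hvpos t htI
      have hvt_ξ : v t < ξ₀ := lt_of_le_of_lt (hvxh t htI2) hxhξ
      have hw't_pos : 0 < w' t := lt_of_lt_of_le hvt_pos (hvle t htI2)
      have hw't_ξ : w' t < ξ₀ := lt_trans (hw'xh t htI2) hxhξ
      have hlv_pos : 0 < l (v t) := hlpos _ hvt_pos
      have hlw_pos : 0 < l (w' t) := hlpos _ hw't_pos
      have hzt_pos : 0 < z t := hzpos t ⟨ht.1, ht.2.le⟩
      have hzt_η₀ : z t < η₀ := lt_of_le_of_lt (hzη t htI2) hηη₀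
      have hwt_pos : 0 < w t := lt_of_lt_of_le hzt_pos (hzw t htI2)
      have hwt_η₀ : w t < η₀ := lt_of_le_of_lt (hbounds t htI).2.1 hηη₀
      have hfz_le : f (z t) ≤ C * f (w t) :=
        hfCinc (z t) ⟨hzt_pos, hzt_η₀⟩ (w t) ⟨hwt_pos, hwt_η₀⟩ (hzw t htI2)
      have hlv_le : l (v t) ≤ C * l (w' t) :=
        hlCinc (v t) ⟨hvt_pos, hvt_ξ⟩ (w' t) ⟨hw't_pos, hw't_ξ⟩ (hvle t htI2)
      have hfz_nonneg : 0 ≤ f (z t) := (hfpos (z t) ⟨hzt_pos, hzt_η₀⟩).le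
      have hfw_pos : 0 < f (w t) := hfpos (w t) ⟨hwt_pos, hwt_η₀⟩
      have hq_eq : q (v t) * (φ' (v t))⁻¹ = v t / l (v t) := by
        have hφ'ne : φ' (v t) ≠ 0 := ne_of_gt (hφ'pos _ hvt_pos)
        have hlne : l (v t) ≠ 0 := ne_of_gt hlv_pos
        show v t * φ' (v t) / l (v t) * (φ' (v t))⁻¹ = v t / l (v t)
        rw [div_mul_eq_mul_div, mul_assoc, mul_inv_cancel₀ hφ'ne, mul_one]
      have hRHS : q (v t) * ((φ' (v t))⁻¹ * ((p t * a t * f (w t) * l (w' t)) / P))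
          = (v t / l (v t)) * ((p t * a t * f (w t) * l (w' t)) / P) := by
        rw [← mul_assoc, hq_eq]
      rw [hRHS, div_mul_div_comm, le_div_iff₀ (by positivity : (0:ℝ) < l (v t) * P)]
      have e1 : f (z t) * l (v t) ≤ C ^ 2 * (f (w t) * l (w' t)) := by
        calc f (z t) * l (v t) ≤ (C * f (w t)) * (C * l (w' t)) :=
              mul_le_mul hfz_le hlv_le hlv_pos.le (by positivity)
          _ = C ^ 2 * (f (w t) * l (w' t)) := by ring
      have e2 : p₀ * a₀ ≤ p t * a t :=
        mul_le_mul (hp₀le t htI) (ha₀le t htI) ha₀pos.le (hppos t htI).le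
      calc β * (f (z t) * v t) * (l (v t) * P)
          = (v t * P * β) * (f (z t) * l (v t)) := by ring
        _ ≤ (v t * P * β) * (C ^ 2 * (f (w t) * l (w' t))) := by
            apply mul_le_mul_of_nonneg_left e1
            exact mul_nonneg (mul_nonneg hvt_pos.le hPpos.le) hβpos.le
        _ = (β * (P * C ^ 2)) * (v t * (f (w t) * l (w' t))) := by ring
        _ ≤ (p₀ * a₀) * (v t * (f (w t) * l (w' t))) := by
            apply mul_le_mul_of_nonneg_right hβle'
            exact mul_nonneg hvt_pos.le (mul_nonneg hfw_pos.le hlw_pos.le)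
        _ ≤ (p t * a t) * (v t * (f (w t) * l (w' t))) := by
            apply mul_le_mul_of_nonneg_right e2
            exact mul_nonneg hvt_pos.le (mul_nonneg hfw_pos.le hlw_pos.le)
        _ = v t * (p t * a t * f (w t) * l (w' t)) := by ring
    have hmonoD : MonotoneOn (fun s => K (v s) - β * F (z s)) (Icc 0 (T/2)) := by
      apply monotoneOn_of_deriv_nonneg (convex_Icc _ _)
      · apply ContinuousOn.sub
        · apply hKcont.comp (hvc.mono hIccsub)
          intro t ht
          exact ⟨(hvpos t (hIccsub ht)).le, le_trans (hvxh t ht) hxhb.le⟩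
        · exact continuousOn_const.mul (hFcont.comp_continuousOn (hzcont.mono hIccsub))
      · intro t ht
        rw [interior_Icc] at ht
        exact (hDder t ht).differentiableAt.differentiableWithinAt
      · intro t ht
        rw [interior_Icc] at ht
        rw [(hDder t ht).deriv]
        have := hval t ht
        linarith
    intro t ht
    have h1 := hmonoD (left_mem_Icc.2 hT2pos.le) ht ht.1
    have h2 : z 0 = 0 := hz0
    have h3 : K (v 0) - β * F (z 0) = K (v 0) := by rw [h2, hF0, mul_zero, sub_zero]
    have h4 : 0 ≤ K (v 0) :=
      hKnonneg (v 0) ⟨hv0pos.le, le_trans (hvxh 0 (left_mem_Icc.2 hT2pos.le)) hxhb.le⟩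
    simp only at h1
    rw [h3] at h1
    linarith
  have hρv : ∀ t ∈ Icc (0:ℝ) (T/2), ρ (β * F (z t)) ≤ v t := by
    intro t ht
    have h2 : ρ (β * F (z t)) ≤ ρ (K (v t)) := hρm.monotone (hEng t ht)
    rwa [hρK (v t) ⟨(hvpos t (hIccsub ht)).le, le_trans (hvxh t ht) hxhb.le⟩] at h2
  have hρpos : ∀ t ∈ Ioc (0:ℝ) (T/2), 0 < ρ (β * F (z t)) := by
    intro t ht
    have h1 : 0 < β * F (z t) :=
      mul_pos hβpos (hFpos (z t) (hzpos t ht)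
        (lt_of_le_of_lt (hzη t ⟨ht.1.le, ht.2⟩) hηη₀))
    have := hρm h1
    rwa [hρ0] at this
  -- final contradiction via the Keller-Osserman length estimate
  set ζ : ℝ := z (T/2) with hζdef
  set Ξ : ℝ := 2 ^ k * κ η₁ with hΞdef
  have hΞlt : Ξ < T / 2 := by
    have := mul_lt_mul_of_pos_left hη₁κ h2kpos
    rw [hΞdef]
    calc 2 ^ k * κ η₁ < 2 ^ k * ((T/2) / 2 ^ k) := this
      _ = T / 2 := by rw [mul_comm]; exact div_mul_cancel₀ _ (ne_of_gt h2kpos)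
  set ε' : ℝ := min (T/4) ((T/2 - Ξ)/2) with hε'def
  have hε'pos : 0 < ε' := lt_min (by linarith) (by linarith)
  have hε'le2 : ε' ≤ T/2 := le_trans (min_le_left _ _) (by linarith)
  have hε'I2 : ε' ∈ Icc (0:ℝ) (T/2) := ⟨hε'pos.le, hε'le2⟩
  have hT2I2 : T/2 ∈ Icc (0:ℝ) (T/2) := right_mem_Icc.2 hT2pos.le
  have hsub1 : Icc ε' (T/2) ⊆ Icc (0:ℝ) T := Icc_subset_Icc hε'pos.le hT2T.le
  have hzε'pos : 0 < z ε' := hzpos ε' ⟨hε'pos, hε'le2⟩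
  have hzε'ζ : z ε' ≤ ζ := hzmono (hIccsub hε'I2) hT2mem hε'le2
  have hζη : ζ ≤ η := hzη (T/2) hT2I2
  have hζη₀ : ζ < η₀ := lt_of_le_of_lt hζη hηη₀
  -- continuity of the two comparison integrands on [z ε', ζ]
  have hG₀cont : ContinuousOn (fun s => (ρ (β * F s))⁻¹) (Icc (z ε') ζ) := by
    apply ContinuousOn.inv₀
    · exact hρc.comp_continuousOn (continuousOn_const.mul hFcont.continuousOn)
    · intro s hs
      have hs_pos : 0 < s := lt_of_lt_of_le hzε'pos hs.1
      have hs_η₀ : s < η₀ := lt_of_le_of_lt hs.2 hζη₀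
      have h1 : 0 < β * F s := mul_pos hβpos (hFpos s hs_pos hs_η₀)
      have h2 := hρm h1
      rw [hρ0] at h2
      exact h2.ne'
  have hHcont : ContinuousOn (fun s => (ρ (F (s / 2 ^ k)))⁻¹) (Icc (z ε') ζ) := by
    apply ContinuousOn.inv₀
    · exact hρc.comp_continuousOn
        (hFcont.comp_continuousOn ((continuousOn_id.div_const _)))
    · intro s hs
      have hs_pos : 0 < s := lt_of_lt_of_le hzε'pos hs.1
      have hs_η₀ : s < η₀ := lt_of_le_of_lt hs.2 hζη₀
      have h0 : 0 < s / 2 ^ k := by positivity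
      have h1 : s / 2 ^ k < η₀ := lt_of_le_of_lt (div_le_self hs_pos.le h2k1) hs_η₀
      have h2 := hρm (hFpos _ h0 h1)
      rw [hρ0] at h2
      exact h2.ne'
  -- step 1: the length bound
  have hmain : T/2 - ε' ≤ ∫ t in ε'..(T/2), v t * (ρ (β * F (z t)))⁻¹ := by
    have h0 : ∫ _ in ε'..(T/2), (1:ℝ) = T/2 - ε' := by simp
    rw [← h0]
    have hInt : IntervalIntegrable (fun t => v t * (ρ (β * F (z t)))⁻¹) volume ε' (T/2) := by
      apply ContinuousOn.intervalIntegrable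
      rw [uIcc_of_le hε'le2]
      apply ContinuousOn.mul (hvc.mono hsub1)
      apply hG₀cont.comp (hzcont.mono hsub1)
      intro x hx
      exact ⟨hzmono (hIccsub hε'I2) (hIccsub ⟨le_trans hε'pos.le hx.1, hx.2⟩) hx.1,
        hzmono (hIccsub ⟨le_trans hε'pos.le hx.1, hx.2⟩) hT2mem hx.2⟩
    apply intervalIntegral.integral_mono_on hε'le2 intervalIntegrable_const hInt
    intro x hx
    have hxI2 : x ∈ Icc (0:ℝ) (T/2) := ⟨le_trans hε'pos.le hx.1, hx.2⟩
    have hρx : 0 < ρ (β * F (z x)) := hρpos x ⟨lt_of_lt_of_le hε'pos hx.1, hx.2⟩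
    have h1 : ρ (β * F (z x)) ≤ v x := hρv x hxI2
    show (1:ℝ) ≤ v x * (ρ (β * F (z x)))⁻¹
    rw [← div_eq_mul_inv, le_div_iff₀ hρx, one_mul]
    exact h1
  -- step 2: substitution u = z t
  have hsubs : ∫ t in ε'..(T/2), v t * (ρ (β * F (z t)))⁻¹
      = ∫ u in (z ε')..ζ, (ρ (β * F u))⁻¹ := by
    have hf : ContinuousOn z (uIcc ε' (T/2)) := by
      rw [uIcc_of_le hε'le2]; exact hzcont.mono hsub1
    have hff' : ∀ x ∈ Ioo (min ε' (T/2)) (max ε' (T/2)),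
        HasDerivWithinAt z (v x) (Ioi x) x := by
      intro x hx
      rw [min_eq_left hε'le2, max_eq_right hε'le2] at hx
      exact (hzd x ⟨lt_trans hε'pos hx.1, lt_trans hx.2 hT2T⟩).hasDerivWithinAt
    have hf' : ContinuousOn v (uIcc ε' (T/2)) := by
      rw [uIcc_of_le hε'le2]; exact hvc.mono hsub1
    have hg : ContinuousOn (fun s => (ρ (β * F s))⁻¹) (z '' uIcc ε' (T/2)) := by
      apply hG₀cont.mono
      rintro y ⟨x, hx, rfl⟩
      rw [uIcc_of_le hε'le2] at hx
      exact ⟨hzmono (hIccsub hε'I2) (hIccsub ⟨le_trans hε'pos.le hx.1, hx.2⟩) hx.1,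
        hzmono (hIccsub ⟨le_trans hε'pos.le hx.1, hx.2⟩) hT2mem hx.2⟩
    have := intervalIntegral.integral_comp_smul_deriv'' hf hff' hf' hg
    simp only [smul_eq_mul, Function.comp] at this
    rw [this]
  -- step 3: comparison with the dilated integrand
  have hcomp : ∫ u in (z ε')..ζ, (ρ (β * F u))⁻¹
      ≤ ∫ u in (z ε')..ζ, (ρ (F (u / 2 ^ k)))⁻¹ := by
    apply intervalIntegral.integral_mono_on hzε'ζ
    · apply ContinuousOn.intervalIntegrable
      rwa [uIcc_of_le hzε'ζ]
    · apply ContinuousOn.intervalIntegrable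
      rwa [uIcc_of_le hzε'ζ]
    intro s hs
    have hs_pos : 0 < s := lt_of_lt_of_le hzε'pos hs.1
    have hs_η₀ : s < η₀ := lt_of_le_of_lt hs.2 hζη₀
    have h1 : F (s / 2 ^ k) ≤ β * F s := hdil s hs_pos hs_η₀
    have h2 : ρ (F (s / 2 ^ k)) ≤ ρ (β * F s) := hρm.monotone h1
    have h3 : 0 < ρ (F (s / 2 ^ k)) := by
      have h0 : 0 < s / 2 ^ k := by positivity
      have h1' : s / 2 ^ k < η₀ := lt_of_le_of_lt (div_le_self hs_pos.le h2k1) hs_η₀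
      have := hρm (hFpos _ h0 h1')
      rwa [hρ0] at this
    exact inv_anti₀ h3 h2
  -- step 4: rescale
  have hresc : ∫ u in (z ε')..ζ, (ρ (F (u / 2 ^ k)))⁻¹
      = 2 ^ k * ∫ u in (z ε' / 2 ^ k)..(ζ / 2 ^ k), (ρ (F u))⁻¹ := by
    rw [intervalIntegral.integral_comp_div (fun u => (ρ (F u))⁻¹) (ne_of_gt h2kpos)]
    rw [smul_eq_mul]
  -- step 5: absorb into the KO integral
  have habs : ∫ u in (z ε' / 2 ^ k)..(ζ / 2 ^ k), (ρ (F u))⁻¹ ≤ κ η₁ := by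
    have hle : z ε' / 2 ^ k ≤ ζ / 2 ^ k := by gcongr
    rw [intervalIntegral.integral_of_le hle, hκdef]
    have hκint : IntegrableOn (fun u => (ρ (F u))⁻¹) (Ioc 0 η₁) :=
      (hHρint.mono_set (Ioo_subset_Ioo le_rfl hη₁mem.2)).congr_set_ae (Ioo_ae_eq_Ioc).symm
    apply setIntegral_mono_set hκint
    · rw [EventuallyLE, ae_restrict_iff' measurableSet_Ioc]
      filter_upwards with u hu
      have hu₀ : 0 < u := hu.1
      have huη₀ : u < η₀ := lt_of_le_of_lt hu.2 (lt_of_le_of_lt hη₁mem.2 hδbη₀)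
      have := hρm (hFpos u hu₀ huη₀)
      rw [hρ0] at this
      simp only [Pi.zero_apply]
      exact (inv_pos.2 this).le
    · apply HasSubset.Subset.eventuallyLE
      apply Ioc_subset_Ioc
      · positivity
      · calc ζ / 2 ^ k ≤ ζ := div_le_self (le_trans hzε'pos.le hzε'ζ) h2k1
          _ ≤ η := hζη
          _ ≤ η₁ := hηlt.le
  -- conclusion
  have hfinal : T/2 - ε' ≤ Ξ := by
    rw [hΞdef]
    calc T/2 - ε' ≤ ∫ t in ε'..(T/2), v t * (ρ (β * F (z t)))⁻¹ := hmain
      _ = ∫ u in (z ε')..ζ, (ρ (β * F u))⁻¹ := hsubs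
      _ ≤ ∫ u in (z ε')..ζ, (ρ (F (u / 2 ^ k)))⁻¹ := hcomp
      _ = 2 ^ k * ∫ u in (z ε' / 2 ^ k)..(ζ / 2 ^ k), (ρ (F u))⁻¹ := hresc
      _ ≤ 2 ^ k * κ η₁ := by
          apply mul_le_mul_of_nonneg_left habs (by positivity)
  have hε'le3 : ε' ≤ (T/2 - Ξ)/2 := min_le_right _ _
  linarith
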